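/- A small locally finite tree has only finitely many vertices of degree greater than 2. -/

import Mathlib

open SimpleGraph

/-- A ray in a graph: a one-way infinite path. -/
def IsRay {V : Type*} (G : SimpleGraph V) (f : ℕ → V) : Prop :=
  Function.Injective f ∧ ∀ n, G.Adj (f n) (f (n + 1))

/-- The degree of a vertex, as an extended natural number. -/
noncomputable def eDeg {V : Type*} (G : SimpleGraph V) (v : V) : ℕ∞ :=
  (G.neighborSet v).encard

/-- A ray is eventually bare if from some index on all its vertices have degree 2. -/
def EventuallyBare {V : Type*} (G : SimpleGraph V) (f : ℕ → V) : Prop :=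
  ∃ M : ℕ, ∀ n ≥ M, eDeg G (f n) = 2

/-- A tree is small if every ray in it is eventually bare. -/
def IsSmall {V : Type*} (G : SimpleGraph V) : Prop :=
  ∀ f : ℕ → V, IsRay G f → EventuallyBare G f

/-- A minor model of `T` in `S`: pairwise disjoint nonempty connected branch sets,
every edge of `T` witnessed by an edge of `S` between the corresponding branch sets. -/
structure IsModel {V W : Type*} (T : SimpleGraph V) (S : SimpleGraph W)
    (μ : V → Set W) : Prop where
  nonempty : ∀ v, (μ v).Nonempty
  connected : ∀ v, (S.induce (μ v)).Connected
  disjoint : ∀ v w, v ≠ w → Disjoint (μ v) (μ w)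
  edge : ∀ v w, T.Adj v w → ∃ a ∈ μ v, ∃ b ∈ μ w, S.Adj a b

/-- `T` is a minor of `S`. -/
def IsMinorOf {V W : Type*} (T : SimpleGraph V) (S : SimpleGraph W) : Prop :=
  ∃ μ : V → Set W, IsModel T S μ

/-- Tree order relative to a root: `v` lies on the (unique) path from `r` to `w`. -/
def treeLE {V : Type*} (G : SimpleGraph V) (r v w : V) : Prop :=
  v = w ∨ ∃ p : G.Walk r w, p.IsPath ∧ v ∈ p.support

/-- Closure of a vertex set: the set together with all vertices on paths joining its members. -/
def treeClosure {V : Type*} (G : SimpleGraph V) (A : Set V) : Set V :=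
  A ∪ {x | ∃ a ∈ A, ∃ b ∈ A, ∃ p : G.Walk a b, p.IsPath ∧ x ∈ p.support}


section Aux
variable {V : Type*} {T : SimpleGraph V}

lemma concat_isPath' {u v w : V} {p : T.Walk u v} (hp : p.IsPath) (h : T.Adj v w)
    (hw : w ∉ p.support) : (p.concat h).IsPath := by
  rw [Walk.isPath_def] at hp ⊢
  rw [Walk.support_concat]
  simpa [List.concat_eq_append, List.nodup_append] using
    (⟨hp, fun a ha e => hw (e ▸ ha)⟩ : p.support.Nodup ∧ ∀ a ∈ p.support, ¬a = w)

lemma path_length_eq_dist (hT : T.IsTree) {u v : V} (p : T.Walk u v) (hp : p.IsPath) :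
    p.length = T.dist u v := by
  classical
  obtain ⟨q, hq⟩ := hT.isConnected.exists_walk_length_eq_dist u v
  have h1 : p = q.bypass := (hT.existsUnique_path u v).unique hp q.bypass_isPath
  have h2 : q.bypass.length ≤ T.dist u v := hq ▸ q.length_bypass_le
  have h3 : T.dist u v ≤ p.length := T.dist_le p
  subst h1; omega

lemma step_lemma (hlf : ∀ v, (T.neighborSet v).Finite)
    {r : V} (P : ∀ w, T.Walk r w) (hP : ∀ w, (P w).IsPath)
    (hPu : ∀ w (q : T.Walk r w), q.IsPath → q = P w)
    {v : V} (p : T.Walk r v) (hp : p.IsPath)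
    (hD : {w | 2 < eDeg T w ∧ v ∈ (P w).support}.Infinite) :
    ∃ u, ∃ h : T.Adj v u, u ∉ p.support ∧
      {w | 2 < eDeg T w ∧ u ∈ (P w).support}.Infinite := by
  classical
  by_contra hcon
  push_neg at hcon
  apply hD
  have hsub : {w | 2 < eDeg T w ∧ v ∈ (P w).support} ⊆
      {x | x ∈ p.support} ∪
        ⋃ u ∈ {u | T.Adj v u ∧ u ∉ p.support}, {w | 2 < eDeg T w ∧ u ∈ (P w).support} := by
    rintro w ⟨hwS, hv⟩
    by_cases hwp : w ∈ p.support
    · exact Or.inl hwp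
    right
    have hvw : v ≠ w := by rintro rfl; exact hwp p.end_mem_support
    obtain ⟨u, h, d', hd⟩ := Walk.exists_eq_cons_of_ne hvw ((P w).dropUntil v hv)
    have htk : (P w).takeUntil v hv = p := by
      rw [hPu v _ ((hP w).takeUntil hv), hPu v p hp]
    have hsupp : (P w).support = p.support ++ d'.support := by
      conv_lhs => rw [← (P w).take_spec hv]
      rw [Walk.support_append, htk, hd, Walk.support_cons, List.tail_cons]
    have hnod : ((P w).support).Nodup := (hP w).support_nodup
    rw [hsupp, List.nodup_append] at hnod
    have hu_not : u ∉ p.support := fun hmem => hnod.2.2 u hmem u d'.start_mem_support rfl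
    refine Set.mem_biUnion (show u ∈ {u | T.Adj v u ∧ u ∉ p.support} from ⟨h, hu_not⟩)
      ⟨hwS, ?_⟩
    rw [hsupp]; exact List.mem_append_right _ d'.start_mem_support
  refine Set.Finite.subset (Set.Finite.union p.support.finite_toSet ?_) hsub
  refine Set.Finite.biUnion ((hlf v).subset fun u hu => hu.1) ?_
  rintro u ⟨h, hu⟩
  exact hcon u h hu

end Aux

/-- A small locally finite tree has only finitely many vertices of degree
greater than `2`. -/
theorem stmt19 {V : Type*} (T : SimpleGraph V) (hT : T.IsTree)
    (hlf : ∀ v, (T.neighborSet v).Finite) (hsmall : IsSmall T) :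
    {v : V | 2 < eDeg T v}.Finite := by
  classical
  by_contra hfin
  have hinf : {v : V | 2 < eDeg T v}.Infinite := hfin
  obtain ⟨r, -⟩ := hinf.nonempty
  choose P hP hPu using hT.existsUnique_path r
  -- build the ray
  have hx0 : (Walk.nil : T.Walk r r).IsPath ∧
      {w | 2 < eDeg T w ∧ r ∈ (P w).support}.Infinite := by
    refine ⟨Walk.IsPath.nil, hinf.mono fun w hw => ⟨hw, (P w).start_mem_support⟩⟩
  have iter_aux : ∀ {α : Type _} (R : α → α → Prop) (x0 : α), (∀ x, ∃ y, R x y) →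
      ∃ F : ℕ → α, F 0 = x0 ∧ ∀ n, R (F n) (F (n+1)) := by
    intro α R x0 h
    choose st hst using h
    refine ⟨fun n => st^[n] x0, rfl, fun n => ?_⟩
    show R (st^[n] x0) (st^[n+1] x0)
    rw [Function.iterate_succ_apply']
    exact hst _
  have hstep : ∀ x : {x : Σ v : V, T.Walk r v //
        x.2.IsPath ∧ {w | 2 < eDeg T w ∧ x.1 ∈ (P w).support}.Infinite},
      ∃ y : {x : Σ v : V, T.Walk r v //
        x.2.IsPath ∧ {w | 2 < eDeg T w ∧ x.1 ∈ (P w).support}.Infinite},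
      ∃ h : T.Adj x.val.1 y.val.1, y.val.2 = x.val.2.concat h := by
    rintro ⟨⟨v, p⟩, hp, hD⟩
    obtain ⟨u, h, hup, hinf'⟩ := step_lemma hlf P hP hPu p hp hD
    exact ⟨⟨⟨u, p.concat h⟩, concat_isPath' hp h hup, hinf'⟩, h, rfl⟩
  obtain ⟨F0, hF00, hF0s⟩ := iter_aux _ ⟨⟨r, Walk.nil⟩, hx0⟩ hstep
  set F : ℕ → Σ v : V, T.Walk r v := fun n => (F0 n).val with hFdef
  have hFpath : ∀ n, (F n).2.IsPath := fun n => (F0 n).prop.1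
  have hFinf : ∀ n, {w | 2 < eDeg T w ∧ (F n).1 ∈ (P w).support}.Infinite :=
    fun n => (F0 n).prop.2
  have hFs : ∀ n, ∃ h : T.Adj (F n).1 (F (n+1)).1, (F (n+1)).2 = (F n).2.concat h :=
    fun n => hF0s n
  have hFlen : ∀ n, (F n).2.length = n := by
    intro n
    induction n with
    | zero =>
      show ((F0 0).val).snd.length = 0
      rw [hF00]
      rfl
    | succ n ih =>
      obtain ⟨h, he⟩ := hFs n
      rw [he, Walk.length_concat, ih]
  set f : ℕ → V := fun n => (F n).1 with hf
  have hinj : Function.Injective f := by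
    intro a b hab
    have ha : T.dist r (f a) = a := by
      rw [← path_length_eq_dist hT (F a).2 (hFpath a), hFlen a]
    have hb : T.dist r (f b) = b := by
      rw [← path_length_eq_dist hT (F b).2 (hFpath b), hFlen b]
    rw [hab, hb] at ha
    omega
  have hray : IsRay T f := ⟨hinj, fun n => (hFs n).choose⟩
  obtain ⟨M, hM⟩ := hsmall f hray
  obtain ⟨w, hwS, hwsup⟩ := (hFinf (M + 1)).nonempty
  -- key: the ray from M+1 on stays inside the path to w
  have key : ∀ n, M + 1 ≤ n → f n ∈ (P w).support := by
    intro n hn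
    induction n, hn using Nat.le_induction with
    | base => exact hwsup
    | succ n hn ih =>
      obtain ⟨k, rfl⟩ : ∃ k, n = k + 1 := ⟨n - 1, by omega⟩
      have hdeg : eDeg T (f (k+1)) = 2 := hM (k+1) (by omega)
      have hvw : f (k+1) ≠ w := by
        rintro rfl
        rw [hdeg] at hwS
        exact lt_irrefl _ hwS
      obtain ⟨u, h, d', hd⟩ := Walk.exists_eq_cons_of_ne hvw ((P w).dropUntil (f (k+1)) ih)
      have htk : (P w).takeUntil (f (k+1)) ih = (F (k+1)).2 := by
        rw [hPu (f (k+1)) _ ((hP w).takeUntil ih), hPu (f (k+1)) (F (k+1)).2 (hFpath (k+1))]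
      have hsupp : (P w).support = (F (k+1)).2.support ++ d'.support := by
        conv_lhs => rw [← (P w).take_spec ih]
        rw [Walk.support_append, htk, hd, Walk.support_cons, List.tail_cons]
      have hnod : ((P w).support).Nodup := (hP w).support_nodup
      rw [hsupp, List.nodup_append] at hnod
      have hu_not : u ∉ (F (k+1)).2.support := fun hmem => hnod.2.2 u hmem u d'.start_mem_support rfl
      -- f k is in the support of F (k+1)
      have hprev : f k ∈ (F (k+1)).2.support := by
        obtain ⟨h', he⟩ := hFs k
        rw [he, Walk.support_concat]
        exact List.mem_append_left _ (F k).2.end_mem_support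
      have hufk : u ≠ f k := fun e => hu_not (e ▸ hprev)
      -- the two neighbors of f (k+1)
      obtain ⟨a, b, hab, hNset⟩ := Set.encard_eq_two.mp hdeg
      have h1 : f k ∈ T.neighborSet (f (k+1)) := ((hFs k).choose).symm
      have h2 : f (k+2) ∈ T.neighborSet (f (k+1)) := (hFs (k+1)).choose
      have hu : u ∈ T.neighborSet (f (k+1)) := h
      rw [hNset] at h1 h2 hu
      simp only [Set.mem_insert_iff, Set.mem_singleton_iff] at h1 h2 hu
      have hfk2 : f k ≠ f (k+2) := fun e => by have := hinj e; omega
      have hueq : u = f (k+2) := by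
        rcases hu with rfl | rfl <;> rcases h1 with h1 | h1 <;> rcases h2 with h2 | h2 <;>
          first
            | (exact h2.symm)
            | (exact absurd h1.symm hufk)
            | (exact absurd (h1.trans h2.symm) hfk2)
            | (exact absurd (h1.trans (Ne.symm hab ▸ rfl : (a:V) = a).symm) hufk)
      have hu_mem : u ∈ (P w).support := by
        rw [hsupp]; exact List.mem_append_right _ d'.start_mem_support
      exact hueq ▸ hu_mem
  -- contradiction: infinitely many distinct vertices on a finite support
  have hbig : {x | x ∈ (P w).support}.Infinite := by
    exact Set.infinite_of_injective_forall_mem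
      (f := fun n : ℕ => f (M + 1 + n))
      (fun a b hab => by have := hinj hab; omega)
      (fun n => key (M + 1 + n) (by omega))
  exact hbig (P w).support.finite_toSet
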